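/- Let n ≥ 2, let u ∈ S^{n−1}, and let h ∈ (0,1). Then the rotation-invariant probability measure of the spherical cap C(u,h) = {θ ∈ S^{n−1} : ⟨u, θ⟩ ≥ h} satisfies σ(C(u,h)) ≤ (2(1−h))^{(n−1)/2} / (h·√(n−1)). -/

import Mathlib

open Metric Set MeasureTheory
open scoped RealInnerProductSpace ENNReal Pointwise

abbrev Euc (n : ℕ) := EuclideanSpace ℝ (Fin n)

/-- The covering number `N(K, T)`: the minimal number of translates of `T`
needed to cover `K`. -/
noncomputable def coveringNumber {n : ℕ} (K T : Set (Euc n)) : ℕ :=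
  sInf {N : ℕ | ∃ x : Fin N → Euc n, K ⊆ ⋃ i, x i +ᵥ T}

/-- The radial function `ρ_K(θ) = sup {t ≥ 0 : tθ ∈ K}`. -/
noncomputable def radialFn {n : ℕ} (K : Set (Euc n)) (θ : Euc n) : ℝ :=
  sSup {t : ℝ | 0 ≤ t ∧ t • θ ∈ K}

/-- The support function `h_K(u) = sup {⟨x, u⟩ : x ∈ K}`. -/
noncomputable def suppFn {n : ℕ} (K : Set (Euc n)) (u : Euc n) : ℝ :=
  sSup ((fun x => ⟪x, u⟫) '' K)

/-- `F` is a facet of `P ⊆ ℝⁿ`: a nonempty exposed face of dimension `n - 1`. -/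
def IsFacet {n : ℕ} (P F : Set (Euc n)) : Prop :=
  F.Nonempty ∧ IsExposed ℝ P F ∧ Module.finrank ℝ (vectorSpan ℝ F) = n - 1


/-- For `n ≥ 2`, `u ∈ S^{n−1}` and `h ∈ (0,1)`, the rotation-invariant probability
measure of the spherical cap `C(u,h) = {θ ∈ S^{n−1} : ⟨u,θ⟩ ≥ h}` is at most
`(2(1−h))^{(n−1)/2} / (h√(n−1))`. -/



lemma exists_rot {n : ℕ} (u v : Euc n) (h : ‖u‖ = ‖v‖) :
    ∃ R : Euc n ≃ₗᵢ[ℝ] Euc n, R u = v :=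
  ⟨Submodule.reflection (ℝ ∙ (u - v))ᗮ, Submodule.reflection_sub h⟩

lemma meas_set1 {n : ℕ} (c : ℝ) (v : Euc n) :
    MeasurableSet {x : Euc n | c * ‖x‖ ≤ ⟪x, v⟫} :=
  measurableSet_le ((continuous_const.mul continuous_norm).measurable)
    ((continuous_id.inner continuous_const).measurable)

lemma cap_inv {n : ℕ} (σ : Measure (Euc n))
    (hσinv : ∀ e : Euc n ≃ₗᵢ[ℝ] Euc n, σ.map e = σ) (h : ℝ) {u v : Euc n}
    (huv : ‖u‖ = ‖v‖) :
    σ {θ | h ≤ ⟪u, θ⟫} = σ {θ | h ≤ ⟪v, θ⟫} := by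
  obtain ⟨R, hR⟩ := exists_rot u v huv
  have hmeas : MeasurableSet {θ : Euc n | h ≤ ⟪v, θ⟫} :=
    measurableSet_le measurable_const
      ((continuous_const.inner continuous_id).measurable)
  conv_rhs => rw [← hσinv R, Measure.map_apply R.continuous.measurable hmeas]
  congr 1
  ext θ
  simp only [mem_preimage, mem_setOf_eq]
  rw [← hR, LinearIsometryEquiv.inner_map_map]

lemma cap_eq_cone {n : ℕ} (hn : 1 ≤ n) (h : ℝ)
    (σ : Measure (Euc n)) [IsProbabilityMeasure σ]
    (hσsph : σ (sphere (0 : Euc n) 1)ᶜ = 0)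
    (hσinv : ∀ e : Euc n ≃ₗᵢ[ℝ] Euc n, σ.map e = σ)
    (u : Euc n) (hu : ‖u‖ = 1) :
    σ {θ | h ≤ ⟪u, θ⟫} * volume (ball (0:Euc n) 1)
      = volume ({x : Euc n | h * ‖x‖ ≤ ⟪x, u⟫} ∩ ball (0:Euc n) 1) := by
  haveI : Nonempty (Fin n) := Fin.pos_iff_nonempty.1 (by omega)
  haveI : Nontrivial (Euc n) := by
    refine ⟨EuclideanSpace.single ⟨0, by omega⟩ 1, 0, ?_⟩
    intro hcontr
    have := congrArg (fun f : Euc n => f ⟨0, by omega⟩) hcontr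
    simp [EuclideanSpace.single] at this
  set μ := volume.restrict (ball (0:Euc n) 1) with hμ
  haveI : IsFiniteMeasure μ :=
    ⟨by rw [hμ, Measure.restrict_apply_univ]; exact measure_ball_lt_top⟩
  set A : Set (Euc n × Euc n) := {p | h * ‖p.2‖ ≤ ⟪p.2, p.1⟫} with hAdef
  have hA : MeasurableSet A :=
    measurableSet_le
      ((continuous_const.mul (continuous_norm.comp continuous_snd)).measurable)
      ((continuous_snd.inner continuous_fst).measurable)
  set K : Set (Euc n) := {x : Euc n | h * ‖x‖ ≤ ⟪x, u⟫} ∩ ball (0:Euc n) 1 with hKdef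
  -- the slice at a unit vector θ
  have key1 : ∀ θ : Euc n, θ ∈ sphere (0:Euc n) 1 →
      μ {x : Euc n | h * ‖x‖ ≤ ⟪x, θ⟫} = volume K := by
    intro θ hθ
    obtain ⟨R, hR⟩ := exists_rot u θ (hu.trans (mem_sphere_zero_iff_norm.1 hθ).symm)
    rw [hμ, Measure.restrict_apply (meas_set1 h θ)]
    rw [← R.measurePreserving.measure_preimage
      (((meas_set1 h θ).inter measurableSet_ball).nullMeasurableSet)]
    congr 1
    ext x
    simp only [hKdef, mem_preimage, mem_inter_iff, mem_setOf_eq, mem_ball_zero_iff,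
      R.norm_map]
    rw [← hR, LinearIsometryEquiv.inner_map_map]
  have fub1 : (σ.prod μ) A = volume K := by
    rw [Measure.prod_apply hA]
    have hae : ∀ᵐ θ ∂σ, θ ∈ sphere (0:Euc n) 1 := by
      rw [MeasureTheory.ae_iff]
      exact hσsph
    calc ∫⁻ θ, μ (Prod.mk θ ⁻¹' A) ∂σ = ∫⁻ _θ, volume K ∂σ := by
          refine lintegral_congr_ae (hae.mono fun θ hθ => ?_)
          exact key1 θ hθ
      _ = volume K := by rw [lintegral_const, measure_univ, mul_one]
  have fub2 : (σ.prod μ) A = σ {θ | h ≤ ⟪u, θ⟫} * volume (ball (0:Euc n) 1) := by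
    rw [Measure.prod_apply_symm hA]
    have hx0 : ∀ᵐ x ∂μ, x ≠ 0 := by
      rw [MeasureTheory.ae_iff]
      refine measure_mono_null (fun x hx => ?_) (?_ : μ {(0:Euc n)} = 0)
      · simpa using hx
      · exact le_antisymm ((Measure.restrict_le_self _).trans_eq (measure_singleton _))
          zero_le
    calc ∫⁻ x, σ ((fun θ => (θ, x)) ⁻¹' A) ∂μ
        = ∫⁻ _x, σ {θ | h ≤ ⟪u, θ⟫} ∂μ := by
          refine lintegral_congr_ae (hx0.mono fun x hx => ?_)
          have hxn : (0:ℝ) < ‖x‖ := norm_pos_iff.2 hx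
          have hset : ((fun θ => (θ, x)) ⁻¹' A) = {θ | h ≤ ⟪‖x‖⁻¹ • x, θ⟫} := by
            ext θ
            simp only [hAdef, mem_preimage, mem_setOf_eq, real_inner_smul_left]
            rw [le_inv_mul_iff₀ hxn, mul_comm]
          dsimp only
          rw [hset, ← cap_inv σ hσinv h (u := u) (v := ‖x‖⁻¹ • x)]
          rw [hu, norm_smul, norm_inv, norm_norm, inv_mul_cancel₀ hxn.ne']
      _ = σ {θ | h ≤ ⟪u, θ⟫} * volume (ball (0:Euc n) 1) := by
          rw [lintegral_const, hμ, Measure.restrict_apply_univ]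
  rw [← fub2, fub1]



lemma slice_vol {m : ℕ} [Nonempty (Fin m)] {r : ℝ} (hr : 0 ≤ r) :
    (volume : Measure (Fin m → ℝ)) {y | Real.sqrt (∑ i, (y i)^2) ≤ r}
      = ENNReal.ofReal (r ^ m * (Real.sqrt Real.pi ^ m / Real.Gamma ((m:ℝ)/2+1))) := by
  have hmeas : MeasurableSet {y : Fin m → ℝ | Real.sqrt (∑ i, (y i)^2) ≤ r} := by
    apply measurableSet_le _ measurable_const
    exact (Finset.measurable_sum _ fun i _ => (measurable_pi_apply i).pow_const 2).sqrt
  rw [← (EuclideanSpace.volume_preserving_symm_measurableEquiv_toLp (Fin m)).measure_preimage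
      hmeas.nullMeasurableSet]
  have hpre : ((MeasurableEquiv.toLp 2 (Fin m → ℝ)).symm) ⁻¹'
      {y | Real.sqrt (∑ i, (y i)^2) ≤ r} = closedBall (0 : Euc m) r := by
    ext z
    simp only [mem_preimage, mem_setOf_eq, mem_closedBall, dist_zero_right,
      MeasurableEquiv.coe_toLp_symm]
    rw [EuclideanSpace.norm_eq]
    congr! 3
    rw [Real.norm_eq_abs, sq_abs]
  rw [hpre, EuclideanSpace.volume_closedBall]
  rw [Fintype.card_fin, ← ENNReal.ofReal_pow hr, ← ENNReal.ofReal_mul (by positivity)]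

lemma oneD_est {m : ℕ} (hm : 1 ≤ m) {h : ℝ} (hh0 : 0 < h) (hh1 : h < 1) :
    ∫ t in Icc (0:ℝ) 1,
        (min (t * (Real.sqrt (1 - h^2) / h)) (Real.sqrt (1 - t^2))) ^ m
      ≤ (1-h^2) ^ ((m:ℝ)/2) * (2 / (h * (m+1))) := by
  set a : ℝ := Real.sqrt (1 - h^2) / h with ha
  have ha0 : 0 ≤ a := by positivity
  have h1h : (0:ℝ) < 1 - h^2 := by nlinarith
  set ρ : ℝ → ℝ := fun t => min (t * a) (Real.sqrt (1 - t^2)) with hρ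
  have hρcont : Continuous ρ :=
    ((continuous_id.mul continuous_const).min
      ((continuous_const.sub (continuous_pow 2)).sqrt))
  have hcont : Continuous fun t => ρ t ^ m := hρcont.pow m
  -- convert to interval integral
  rw [MeasureTheory.integral_Icc_eq_integral_Ioc,
    ← intervalIntegral.integral_of_le (zero_le_one)]
  have hint : ∀ u v : ℝ, IntervalIntegrable (fun t => ρ t ^ m) volume u v :=
    fun u v => hcont.intervalIntegrable u v
  rw [← intervalIntegral.integral_add_adjacent_intervals (a := (0:ℝ)) (b := h) (c := 1)
    (hint 0 h) (hint h 1)]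
  have sqm : (Real.sqrt (1 - h^2)) ^ m = (1-h^2) ^ ((m:ℝ)/2) := by
    rw [Real.sqrt_eq_rpow, ← Real.rpow_natCast ((1-h^2) ^ ((1:ℝ)/2)) m,
      ← Real.rpow_mul h1h.le]
    congr 1
    ring
  -- piece 1
  have p1 : ∫ t in (0:ℝ)..h, ρ t ^ m ≤ (1-h^2) ^ ((m:ℝ)/2) * (h / (m+1)) := by
    have hb : ∫ t in (0:ℝ)..h, (a*t) ^ m = a^m * (h^(m+1) / (m+1)) := by
      simp_rw [mul_pow]
      rw [intervalIntegral.integral_const_mul, integral_pow]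
      norm_num
    have hmono : ∫ t in (0:ℝ)..h, ρ t ^ m ≤ ∫ t in (0:ℝ)..h, (a*t) ^ m := by
      apply intervalIntegral.integral_mono_on hh0.le (hint 0 h)
        (((continuous_const.mul continuous_id).pow m).intervalIntegrable 0 h)
      intro t ht
      apply pow_le_pow_left₀ (le_min (by nlinarith [ht.1]) (Real.sqrt_nonneg _))
      rw [mul_comm]
      exact min_le_left _ _
    refine hmono.trans (le_of_eq ?_)
    rw [hb, ha, div_pow, sqm, pow_succ]
    have hhm : (h:ℝ)^m ≠ 0 := (pow_pos hh0 m).ne'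
    field_simp
    ring
  -- helper for sqrt-to-rpow
  have sq' : ∀ s : ℝ, 0 ≤ 1 - s^2 →
      (Real.sqrt (1 - s^2)) ^ m = (1-s^2) ^ ((m:ℝ)/2) := by
    intro s hs
    rw [Real.sqrt_eq_rpow, ← Real.rpow_natCast ((1-s^2) ^ ((1:ℝ)/2)) m,
      ← Real.rpow_mul hs]
    congr 1
    ring
  -- piece 2
  have p2 : ∫ t in h..(1:ℝ), ρ t ^ m
      ≤ (1-h^2) ^ ((m:ℝ)/2) * ((1-h^2) / (h * ((m:ℝ)+2))) := by
    set p : ℝ := ((m:ℝ)+2)/2 with hpdef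
    have hm0 : (0:ℝ) ≤ (m:ℝ) := Nat.cast_nonneg m
    have hp1 : 1 ≤ p := by rw [hpdef]; nlinarith
    have hderiv : ∀ t : ℝ, HasDerivAt (fun s => -(1-s^2) ^ p / ((m:ℝ)+2))
        (t * (1-t^2) ^ ((m:ℝ)/2)) t := by
      intro t
      have h1 : HasDerivAt (fun s : ℝ => 1 - s^2) (-(2*t)) t := by
        simpa using ((hasDerivAt_pow 2 t).const_sub 1)
      have h2 : HasDerivAt (fun s : ℝ => (1-s^2) ^ p)
          (p * (1-t^2) ^ (p-1) * (-(2*t))) t :=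
        (Real.hasDerivAt_rpow_const (Or.inr hp1)).comp t h1
      have h3 := (h2.neg).div_const ((m:ℝ)+2)
      refine h3.congr_deriv ?_
      have hpm : p - 1 = (m:ℝ)/2 := by rw [hpdef]; ring
      rw [hpm, hpdef]
      field_simp
    have hcont2 : ContinuousOn (fun t : ℝ => t * (1-t^2) ^ ((m:ℝ)/2)) (Set.uIcc h 1) := by
      apply continuousOn_id.mul
      apply ContinuousOn.rpow_const (by fun_prop)
      intro x hx
      right; positivity
    have hftc := intervalIntegral.integral_eq_sub_of_hasDerivAt
      (f := fun s => -(1-s^2) ^ p / ((m:ℝ)+2)) (a := h) (b := 1)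
      (fun t _ => hderiv t) (hcont2.intervalIntegrable)
    have hmono : ∫ t in h..(1:ℝ), ρ t ^ m
        ≤ ∫ t in h..(1:ℝ), (1/h) * (t * (1-t^2) ^ ((m:ℝ)/2)) := by
      apply intervalIntegral.integral_mono_on hh1.le (hint h 1)
        ((continuousOn_const.mul hcont2).intervalIntegrable)
      intro t ht
      have h0t : 0 ≤ t := hh0.le.trans ht.1
      have h1t : 0 ≤ 1 - t^2 := by nlinarith [ht.2]
      have h0ρ : 0 ≤ ρ t := le_min (by positivity) (Real.sqrt_nonneg _)
      calc ρ t ^ m ≤ (Real.sqrt (1-t^2)) ^ m :=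
            pow_le_pow_left₀ h0ρ (min_le_right _ _) m
        _ = (1-t^2) ^ ((m:ℝ)/2) := sq' t h1t
        _ ≤ (1/h) * (t * (1-t^2) ^ ((m:ℝ)/2)) := by
            have hrp : 0 ≤ (1-t^2) ^ ((m:ℝ)/2) := Real.rpow_nonneg h1t _
            rw [← mul_assoc]
            nth_rewrite 1 [← one_mul ((1-t^2) ^ ((m:ℝ)/2))]
            apply mul_le_mul_of_nonneg_right _ hrp
            rw [one_div, inv_mul_eq_div, le_div_iff₀ hh0, one_mul]
            exact ht.1
    refine hmono.trans ?_
    rw [intervalIntegral.integral_const_mul, hftc]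
    have hF1 : -(1-(1:ℝ)^2) ^ p / ((m:ℝ)+2) = 0 := by
      rw [show (1-(1:ℝ)^2) = 0 by norm_num,
        Real.zero_rpow (by positivity : (0:ℝ) < p).ne']
      simp
    rw [hF1, zero_sub]
    have hppm : p = (m:ℝ)/2 + 1 := by rw [hpdef]; ring
    rw [hppm] at *
    apply le_of_eq
    rw [Real.rpow_add h1h, Real.rpow_one]
    field_simp
  refine (add_le_add p1 p2).trans ?_
  rw [← mul_add]
  apply mul_le_mul_of_nonneg_left _ (Real.rpow_nonneg h1h.le _)
  have hm0 : (0:ℝ) ≤ (m:ℝ) := Nat.cast_nonneg m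
  have e1 : h/((m:ℝ)+1) ≤ 1/(h*((m:ℝ)+1)) := by
    rw [div_le_div_iff₀ (by positivity) (by positivity)]
    nlinarith
  have e2 : (1-h^2)/(h*((m:ℝ)+2)) ≤ 1/(h*((m:ℝ)+1)) := by
    rw [div_le_div_iff₀ (by positivity) (by positivity)]
    nlinarith [mul_nonneg (mul_nonneg hh0.le (sq_nonneg h)) hm0,
      mul_nonneg hh0.le (sq_nonneg h)]
  calc h/((m:ℝ)+1) + (1-h^2)/(h*((m:ℝ)+2))
      ≤ 1/(h*((m:ℝ)+1)) + 1/(h*((m:ℝ)+1)) := add_le_add e1 e2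
    _ = 2 / (h * ((m:ℝ)+1)) := by ring

lemma sum_sq_meas {k : ℕ} : Measurable fun y : Fin k → ℝ => ∑ i, (y i)^2 :=
  Finset.measurable_sum _ fun i _ => (measurable_pi_apply i).pow_const 2

lemma cone_vol_le {m : ℕ} (hm : 1 ≤ m) {h : ℝ} (hh0 : 0 < h) (hh1 : h < 1) :
    volume ({x : Euc (m+1) | h * ‖x‖ ≤ x 0} ∩ ball (0:Euc (m+1)) 1)
      ≤ ENNReal.ofReal ((Real.sqrt Real.pi ^ m / Real.Gamma ((m:ℝ)/2+1)) *
          ((1-h^2) ^ ((m:ℝ)/2) * (2 / (h * ((m:ℝ)+1))))) := by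
  haveI : Nonempty (Fin m) := Fin.pos_iff_nonempty.1 (by omega)
  have h1h : (0:ℝ) < 1 - h^2 := by nlinarith
  set c : ℝ := Real.sqrt Real.pi ^ m / Real.Gamma ((m:ℝ)/2+1) with hc
  have hΓ : 0 < Real.Gamma ((m:ℝ)/2+1) := Real.Gamma_pos_of_pos (by positivity)
  have hc0 : 0 ≤ c := by positivity
  set a : ℝ := Real.sqrt (1 - h^2) / h with ha
  have ha0 : 0 ≤ a := by positivity
  set ρ : ℝ → ℝ := fun t => min (t * a) (Real.sqrt (1 - t^2)) with hρ
  set T : Set (Fin (m+1) → ℝ) :=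
    {x | h * Real.sqrt (∑ i, (x i)^2) ≤ x 0 ∧ (∑ i, (x i)^2) < 1} with hT
  have hTmeas : MeasurableSet T := by
    apply MeasurableSet.inter
    · exact measurableSet_le (measurable_const.mul sum_sq_meas.sqrt)
        (measurable_pi_apply 0)
    · exact measurableSet_lt sum_sq_meas measurable_const
  have step1 : volume ({x : Euc (m+1) | h * ‖x‖ ≤ x 0} ∩ ball (0:Euc (m+1)) 1)
      = (volume : Measure (Fin (m+1) → ℝ)) T := by
    rw [← (EuclideanSpace.volume_preserving_symm_measurableEquiv_toLp (Fin (m+1))).measure_preimage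
      hTmeas.nullMeasurableSet]
    congr 1
    ext z
    have hs0 : (0:ℝ) ≤ ∑ i, (z i)^2 := by positivity
    have hnz : ‖z‖ = Real.sqrt (∑ i, (z i)^2) := by
      rw [EuclideanSpace.norm_eq]
      congr! 2 with i
      rw [Real.norm_eq_abs, sq_abs]
    simp only [mem_preimage, hT, mem_setOf_eq, mem_inter_iff, mem_ball_zero_iff,
      MeasurableEquiv.coe_toLp_symm]
    rw [← hnz]
    have hzsq : ‖z‖^2 = ∑ i, (z i)^2 := by rw [hnz, Real.sq_sqrt hs0]
    constructor
    · rintro ⟨h1, h2⟩; exact ⟨h1, by nlinarith [norm_nonneg z]⟩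
    · rintro ⟨h1, h2⟩; exact ⟨h1, by nlinarith [norm_nonneg z]⟩
  set Sl : ℝ → Set (Fin m → ℝ) := fun t =>
    {y | h * Real.sqrt (t^2 + ∑ i, (y i)^2) ≤ t ∧ t^2 + (∑ i, (y i)^2) < 1} with hSl
  have step2 : (volume : Measure (Fin (m+1) → ℝ)) T = ∫⁻ t : ℝ, volume (Sl t) := by
    have hmp := (volume_preserving_piFinSuccAbove (fun _ : Fin (m+1) => ℝ) 0).symm
    rw [← hmp.measure_preimage hTmeas.nullMeasurableSet]
    have hpre : ((MeasurableEquiv.piFinSuccAbove (fun _ : Fin (m+1) => ℝ) 0).symm ⁻¹' T)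
        = {p : ℝ × (Fin m → ℝ) |
            h * Real.sqrt (p.1^2 + ∑ i, (p.2 i)^2) ≤ p.1 ∧ p.1^2 + (∑ i, (p.2 i)^2) < 1} := by
      ext ⟨t, y⟩
      simp only [mem_preimage, MeasurableEquiv.piFinSuccAbove_symm_apply, hT, mem_setOf_eq,
        Fin.insertNthEquiv, Equiv.coe_fn_mk, Fin.insertNth_zero']
      rw [Fin.sum_univ_succ]
      simp only [Fin.cons_zero, Fin.cons_succ]
    have hpm : MeasurableSet {p : ℝ × (Fin m → ℝ) |
        h * Real.sqrt (p.1^2 + ∑ i, (p.2 i)^2) ≤ p.1 ∧ p.1^2 + (∑ i, (p.2 i)^2) < 1} := by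
      have hq : Measurable fun p : ℝ × (Fin m → ℝ) => p.1^2 + ∑ i, (p.2 i)^2 :=
        (measurable_fst.pow_const 2).add (sum_sq_meas.comp measurable_snd)
      exact (measurableSet_le (measurable_const.mul hq.sqrt) measurable_fst).inter
        (measurableSet_lt hq measurable_const)
    rw [hpre, MeasureTheory.Measure.volume_eq_prod, Measure.prod_apply hpm]
    rfl
  -- pointwise slice bound
  have hslice : ∀ t : ℝ, volume (Sl t)
      ≤ Set.indicator (Icc (0:ℝ) 1) (fun t => ENNReal.ofReal (ρ t ^ m * c)) t := by
    intro t
    by_cases ht : t ∈ Icc (0:ℝ) 1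
    · rw [Set.indicator_of_mem ht]
      have hρ0 : 0 ≤ ρ t := le_min (mul_nonneg ht.1 ha0) (Real.sqrt_nonneg _)
      calc volume (Sl t) ≤ volume {y : Fin m → ℝ | Real.sqrt (∑ i, (y i)^2) ≤ ρ t} := by
            apply measure_mono
            rintro y ⟨hy1, hy2⟩
            have hQ0 : (0:ℝ) ≤ ∑ i, (y i)^2 := by positivity
            have hsq : h^2 * (t^2 + ∑ i, (y i)^2) ≤ t^2 := by
              have := mul_self_le_mul_self (by positivity) hy1
              rwa [mul_mul_mul_comm, Real.mul_self_sqrt (by positivity), ← sq, ← sq] at this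
            have hb1 : Real.sqrt (∑ i, (y i)^2) ≤ t * a := by
              rw [show t * a = Real.sqrt ((t*a)^2) from
                (Real.sqrt_sq (mul_nonneg ht.1 ha0)).symm]
              apply Real.sqrt_le_sqrt
              rw [ha, mul_pow, div_pow, Real.sq_sqrt h1h.le,
                ← mul_div_assoc, le_div_iff₀ (by positivity : (0:ℝ) < h^2)]
              nlinarith
            have hb2 : Real.sqrt (∑ i, (y i)^2) ≤ Real.sqrt (1 - t^2) := by
              apply Real.sqrt_le_sqrt
              linarith
            exact le_min hb1 hb2
        _ = ENNReal.ofReal (ρ t ^ m * c) := slice_vol hρ0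
    · rw [Set.indicator_of_notMem ht]
      have : Sl t = ∅ := by
        rw [eq_empty_iff_forall_notMem]
        rintro y ⟨hy1, hy2⟩
        have hQ0 : (0:ℝ) ≤ ∑ i, (y i)^2 := by positivity
        have h0t : 0 ≤ t := le_trans (by positivity) hy1
        have ht1 : t ≤ 1 := by nlinarith
        exact ht ⟨h0t, ht1⟩
      rw [this, measure_empty]
  have step3 : ∫⁻ t : ℝ, volume (Sl t)
      ≤ ENNReal.ofReal (c * ((1-h^2) ^ ((m:ℝ)/2) * (2 / (h * ((m:ℝ)+1))))) := by
    refine le_trans (lintegral_mono hslice) ?_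
    rw [lintegral_indicator measurableSet_Icc]
    have hρcont : Continuous fun t => ρ t ^ m :=
      ((continuous_id.mul continuous_const).min
        ((continuous_const.sub (continuous_pow 2)).sqrt)).pow m
    have hInt : IntegrableOn (fun t => ρ t ^ m * c) (Icc (0:ℝ) 1) volume :=
      ((hρcont.mul continuous_const).continuousOn).integrableOn_compact isCompact_Icc
    rw [← MeasureTheory.ofReal_integral_eq_lintegral_ofReal hInt ?nonneg]
    case nonneg =>
      refine (ae_restrict_iff' measurableSet_Icc).2 (ae_of_all _ fun t ht => ?_)
      have hρ0 : 0 ≤ ρ t := le_min (mul_nonneg ht.1 ha0) (Real.sqrt_nonneg _)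
      positivity
    · apply ENNReal.ofReal_le_ofReal
      rw [MeasureTheory.integral_mul_const]
      rw [mul_comm c]
      apply mul_le_mul_of_nonneg_right _ hc0
      exact oneD_est hm hh0 hh1
  calc volume ({x : Euc (m+1) | h * ‖x‖ ≤ x 0} ∩ ball (0:Euc (m+1)) 1)
      = ∫⁻ t : ℝ, volume (Sl t) := by rw [step1, step2]
    _ ≤ _ := step3


lemma gamma_sq_le' {x : ℝ} (hx : (1:ℝ)/2 < x) :
    Real.Gamma x ^ 2 ≤ Real.Gamma (x - 1/2) * Real.Gamma (x + 1/2) := by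
  have h1 : (0:ℝ) < x - 1/2 := by linarith
  have h2 : (0:ℝ) < x + 1/2 := by linarith
  have h := Real.convexOn_log_Gamma.2 (mem_Ioi.2 h1) (mem_Ioi.2 h2)
      (by norm_num : (0:ℝ) ≤ 1/2) (by norm_num : (0:ℝ) ≤ 1/2) (by norm_num)
  have hx' : (1/2 : ℝ) • (x - 1/2) + (1/2 : ℝ) • (x + 1/2) = x := by
    simp only [smul_eq_mul]; ring
  rw [hx'] at h
  have hΓ1 := Real.Gamma_pos_of_pos h1
  have hΓ2 := Real.Gamma_pos_of_pos h2
  have hΓx := Real.Gamma_pos_of_pos (by linarith : (0:ℝ) < x)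
  have hlog : 2 * Real.log (Real.Gamma x) ≤
      Real.log (Real.Gamma (x - 1/2)) + Real.log (Real.Gamma (x + 1/2)) := by
    simp only [Function.comp, smul_eq_mul] at h; linarith
  have hexp := Real.exp_le_exp.2 hlog
  rwa [Real.exp_add, Real.exp_log hΓ1, Real.exp_log hΓ2,
    show 2 * Real.log (Real.Gamma x) = Real.log (Real.Gamma x ^ 2) by
      rw [Real.log_pow]; push_cast; ring,
    Real.exp_log (by positivity)] at hexp

lemma gamma_KI {m : ℕ} (hm : 1 ≤ m) :
    2 * Real.Gamma ((((m:ℝ))+1)/2+1) * Real.sqrt m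
      ≤ Real.sqrt Real.pi * ((m:ℝ)+1) * Real.Gamma ((m:ℝ)/2+1) := by
  have hm0 : (0:ℝ) < m := by exact_mod_cast Nat.pos_of_ne_zero (by omega)
  have hΓm2 := Real.Gamma_pos_of_pos (by positivity : (0:ℝ) < (m:ℝ)/2)
  -- Γ((m+1)/2) ≤ √(m/2) Γ(m/2)
  have gb : Real.Gamma (((m:ℝ)+1)/2) ≤ Real.sqrt ((m:ℝ)/2) * Real.Gamma ((m:ℝ)/2) := by
    have hsq := gamma_sq_le' (x := ((m:ℝ)+1)/2) (by nlinarith)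
    have e1 : ((m:ℝ)+1)/2 - 1/2 = (m:ℝ)/2 := by ring
    have e2 : ((m:ℝ)+1)/2 + 1/2 = (m:ℝ)/2 + 1 := by ring
    rw [e1, e2, Real.Gamma_add_one (by positivity)] at hsq
    have hΓ1 := Real.Gamma_pos_of_pos (by positivity : (0:ℝ) < ((m:ℝ)+1)/2)
    have key : Real.Gamma (((m:ℝ)+1)/2) ^ 2 ≤ (Real.sqrt ((m:ℝ)/2) * Real.Gamma ((m:ℝ)/2))^2 := by
      rw [mul_pow, Real.sq_sqrt (by positivity)]
      nlinarith
    exact (pow_le_pow_iff_left₀ hΓ1.le (by positivity) two_ne_zero).1 key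
  -- rewrite Γ(+1)'s
  rw [show (((m:ℝ))+1)/2+1 = (((m:ℝ)+1)/2) + 1 by ring,
    Real.Gamma_add_one (by positivity), Real.Gamma_add_one (by positivity : (m:ℝ)/2 ≠ 0)]
  -- goal: 2 * (((m+1)/2) * Γ((m+1)/2)) * √m ≤ √π (m+1) * ((m/2) Γ(m/2))
  have hsm : Real.sqrt m * Real.sqrt ((m:ℝ)/2) ≤ Real.sqrt Real.pi * ((m:ℝ)/2) := by
    rw [← Real.sqrt_mul (by positivity),
      show Real.sqrt Real.pi * ((m:ℝ)/2) = Real.sqrt (Real.pi * ((m:ℝ)/2)^2) by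
        rw [Real.sqrt_mul Real.pi_pos.le, Real.sqrt_sq (by positivity)]]
    apply Real.sqrt_le_sqrt
    nlinarith [Real.pi_gt_three]
  calc 2 * ((((m:ℝ)+1)/2) * Real.Gamma (((m:ℝ)+1)/2)) * Real.sqrt m
      ≤ 2 * ((((m:ℝ)+1)/2) * (Real.sqrt ((m:ℝ)/2) * Real.Gamma ((m:ℝ)/2))) * Real.sqrt m := by
        gcongr
    _ = ((m:ℝ)+1) * Real.Gamma ((m:ℝ)/2) * (Real.sqrt m * Real.sqrt ((m:ℝ)/2)) := by ring
    _ ≤ ((m:ℝ)+1) * Real.Gamma ((m:ℝ)/2) * (Real.sqrt Real.pi * ((m:ℝ)/2)) := by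
        apply mul_le_mul_of_nonneg_left hsm (by positivity)
    _ = Real.sqrt Real.pi * ((m:ℝ)+1) * ((m:ℝ)/2 * Real.Gamma ((m:ℝ)/2)) := by ring

lemma final_real {m : ℕ} (hm : 1 ≤ m) {h : ℝ} (hh0 : 0 < h) (hh1 : h < 1) :
    (Real.sqrt Real.pi ^ m / Real.Gamma ((m:ℝ)/2+1)) *
        ((1-h^2) ^ ((m:ℝ)/2) * (2 / (h * ((m:ℝ)+1)))) /
      (Real.sqrt Real.pi ^ (m+1) / Real.Gamma ((((m:ℝ))+1)/2+1))
      ≤ (2*(1-h)) ^ ((m:ℝ)/2) / (h * Real.sqrt m) := by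
  have hm0 : (0:ℝ) < m := by exact_mod_cast Nat.pos_of_ne_zero (by omega)
  have hΓ1 := Real.Gamma_pos_of_pos (by positivity : (0:ℝ) < (m:ℝ)/2+1)
  have hΓ2 := Real.Gamma_pos_of_pos (by positivity : (0:ℝ) < (((m:ℝ))+1)/2+1)
  have hπ := Real.pi_pos
  have hsπ : 0 < Real.sqrt Real.pi := Real.sqrt_pos.2 hπ
  have hsm : 0 < Real.sqrt m := Real.sqrt_pos.2 hm0
  have h1h : (0:ℝ) < 1 - h^2 := by nlinarith
  have hRle : (1-h^2) ^ ((m:ℝ)/2) ≤ (2*(1-h)) ^ ((m:ℝ)/2) := by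
    apply Real.rpow_le_rpow h1h.le (by nlinarith) (by positivity)
  have hR'0 : (0:ℝ) ≤ (2*(1-h)) ^ ((m:ℝ)/2) := Real.rpow_nonneg (by nlinarith) _
  -- rewrite LHS
  have lhs_eq : (Real.sqrt Real.pi ^ m / Real.Gamma ((m:ℝ)/2+1)) *
        ((1-h^2) ^ ((m:ℝ)/2) * (2 / (h * ((m:ℝ)+1)))) /
      (Real.sqrt Real.pi ^ (m+1) / Real.Gamma ((((m:ℝ))+1)/2+1))
      = (1-h^2) ^ ((m:ℝ)/2) *
        (2 * Real.Gamma ((((m:ℝ))+1)/2+1) /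
          (Real.Gamma ((m:ℝ)/2+1) * h * ((m:ℝ)+1) * Real.sqrt Real.pi)) := by
    rw [pow_succ]
    field_simp
    ring
  rw [lhs_eq]
  calc (1-h^2) ^ ((m:ℝ)/2) *
        (2 * Real.Gamma ((((m:ℝ))+1)/2+1) /
          (Real.Gamma ((m:ℝ)/2+1) * h * ((m:ℝ)+1) * Real.sqrt Real.pi))
      ≤ (2*(1-h)) ^ ((m:ℝ)/2) *
        (2 * Real.Gamma ((((m:ℝ))+1)/2+1) /
          (Real.Gamma ((m:ℝ)/2+1) * h * ((m:ℝ)+1) * Real.sqrt Real.pi)) := by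
        apply mul_le_mul_of_nonneg_right hRle (by positivity)
    _ ≤ (2*(1-h)) ^ ((m:ℝ)/2) * (1 / (h * Real.sqrt m)) := by
        apply mul_le_mul_of_nonneg_left _ hR'0
        rw [div_le_div_iff₀ (by positivity) (by positivity)]
        have := gamma_KI hm
        nlinarith [mul_pos hΓ1 (mul_pos hh0 hsm), mul_pos hsπ hm0, hh0]
    _ = (2*(1-h)) ^ ((m:ℝ)/2) / (h * Real.sqrt m) := by ring
theorem measure_of_cap_le {n : ℕ} (hn : 2 ≤ n)
    (u : Euc n) (hu : u ∈ sphere (0 : Euc n) 1)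
    (h : ℝ) (hh : h ∈ Set.Ioo (0 : ℝ) 1)
    (σ : Measure (Euc n)) [IsProbabilityMeasure σ]
    (hσsph : σ (sphere (0 : Euc n) 1)ᶜ = 0)
    (hσinv : ∀ e : Euc n ≃ₗᵢ[ℝ] Euc n, σ.map e = σ) :
    (σ {θ | θ ∈ sphere (0 : Euc n) 1 ∧ h ≤ ⟪u, θ⟫}).toReal ≤
      (2 * (1 - h)) ^ (((n : ℝ) - 1) / 2) / (h * Real.sqrt ((n : ℝ) - 1)) := by
  obtain ⟨hh0, hh1⟩ := hh
  obtain ⟨m, rfl⟩ : ∃ m, n = m + 1 := ⟨n - 1, by omega⟩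
  have hm : 1 ≤ m := by omega
  set e₀ : Euc (m+1) := EuclideanSpace.single 0 1 with he₀
  have he₀n : ‖e₀‖ = 1 := by rw [he₀, EuclideanSpace.norm_single, norm_one]
  have hu1 : ‖u‖ = 1 := mem_sphere_zero_iff_norm.1 hu
  have hsub : σ {θ | θ ∈ sphere (0:Euc (m+1)) 1 ∧ h ≤ ⟪u, θ⟫}
      ≤ σ {θ | h ≤ ⟪e₀, θ⟫} := by
    have h1 : {θ : Euc (m+1) | θ ∈ sphere (0:Euc (m+1)) 1 ∧ h ≤ ⟪u, θ⟫}
        ⊆ {θ : Euc (m+1) | h ≤ ⟪u, θ⟫} := fun θ ht => ht.2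
    calc σ {θ | θ ∈ sphere (0:Euc (m+1)) 1 ∧ h ≤ ⟪u, θ⟫}
        ≤ σ {θ : Euc (m+1) | h ≤ ⟪u, θ⟫} := measure_mono h1
      _ = σ {θ | h ≤ ⟪e₀, θ⟫} := cap_inv σ hσinv h (hu1.trans he₀n.symm)
  have key := cap_eq_cone (by omega) h σ hσsph hσinv e₀ he₀n
  have hset : {x : Euc (m+1) | h * ‖x‖ ≤ ⟪x, e₀⟫} ∩ ball (0:Euc (m+1)) 1
      = {x : Euc (m+1) | h * ‖x‖ ≤ x 0} ∩ ball (0:Euc (m+1)) 1 := by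
    have hinner : ∀ x : Euc (m+1), ⟪x, e₀⟫ = x 0 := by
      intro x
      rw [he₀, EuclideanSpace.inner_single_right]
      simp
    ext x
    simp only [mem_inter_iff, mem_setOf_eq, hinner]
  rw [hset] at key
  have hKbound := cone_vol_le hm hh0 hh1
  have hvolB : volume (ball (0:Euc (m+1)) 1)
      = ENNReal.ofReal (Real.sqrt Real.pi ^ (m+1) / Real.Gamma ((((m:ℝ))+1)/2+1)) := by
    rw [EuclideanSpace.volume_ball, Fintype.card_fin, ENNReal.ofReal_one, one_pow, one_mul]
    congr 2
    push_cast
    ring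
  set Breal : ℝ := Real.sqrt Real.pi ^ (m+1) / Real.Gamma ((((m:ℝ))+1)/2+1) with hBreal
  have hB0 : 0 < Breal := by
    have := Real.Gamma_pos_of_pos (by positivity : (0:ℝ) < (((m:ℝ))+1)/2+1)
    positivity
  set Creal : ℝ := (Real.sqrt Real.pi ^ m / Real.Gamma ((m:ℝ)/2+1)) *
      ((1-h^2) ^ ((m:ℝ)/2) * (2 / (h * ((m:ℝ)+1)))) with hCreal
  have hC0 : 0 ≤ Creal := by
    have h1 := Real.Gamma_pos_of_pos (by positivity : (0:ℝ) < (m:ℝ)/2+1)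
    have h2 : (0:ℝ) ≤ (1-h^2) ^ ((m:ℝ)/2) := Real.rpow_nonneg (by nlinarith) _
    positivity
  set s := σ {θ | h ≤ ⟪e₀, θ⟫} with hs
  have hsfin : s ≠ ⊤ := measure_ne_top σ _
  have hmain : s.toReal * Breal ≤ Creal := by
    have h1 : (s * volume (ball (0:Euc (m+1)) 1)).toReal
        ≤ (ENNReal.ofReal Creal).toReal := by
      rw [key]
      exact ENNReal.toReal_mono ENNReal.ofReal_ne_top hKbound
    rwa [ENNReal.toReal_mul, hvolB, ENNReal.toReal_ofReal hB0.le,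
      ENNReal.toReal_ofReal hC0] at h1
  have hcast1 : ((m+1:ℕ):ℝ) - 1 = (m:ℝ) := by push_cast; ring
  rw [hcast1]
  calc (σ {θ | θ ∈ sphere (0:Euc (m+1)) 1 ∧ h ≤ ⟪u, θ⟫}).toReal
      ≤ s.toReal := ENNReal.toReal_mono hsfin hsub
    _ ≤ Creal / Breal := by rw [le_div_iff₀ hB0]; exact hmain
    _ ≤ (2*(1-h)) ^ ((m:ℝ)/2) / (h * Real.sqrt m) := final_real hm hh0 hh1
    _ = (2 * (1 - h)) ^ ((m:ℝ)/2) / (h * Real.sqrt m) := by ring_nf
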